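/- Let a, b, c, d be real numbers with b ≠ 0 and d ≠ 0, let a₀, a₁ : ℝ → ℝ, let U ⊆ ℝ be open, and let y : ℝ → ℝ be four times continuously differentiable on U with y⁽⁴⁾(x) + a₁(x)y′(x) + a₀(x)y(x) = 0 for all x ∈ U. Define φ(x̄) = (x̄ − c(1 + a·x̄))/(b(1 + a·x̄)), t(x̄) = 1 + a·x̄, and ȳ(x̄) = d·t(x̄)³·y(φ(x̄)). Then for every x̄ with t(x̄) ≠ 0 and φ(x̄) ∈ U, one has ȳ⁽⁴⁾(x̄) + ā₁(x̄)ȳ′(x̄) + ā₀(x̄)ȳ(x̄) = 0, where ā₁(x̄) = a₁(φ(x̄))/(b³ t(x̄)⁶) and ā₀(x̄) = a₀(φ(x̄))/(b⁴ t(x̄)⁸) − 3a·a₁(φ(x̄))/(b³ t(x̄)⁷). -/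

import Mathlib

/-- The point transformation of the independent variable:
`φ(x̄) = (x̄ − c(1 + a x̄)) / (b(1 + a x̄))`. -/
noncomputable def phi (a b c : ℝ) (x : ℝ) : ℝ :=
  (x - c * (1 + a * x)) / (b * (1 + a * x))

/-- The transformed dependent variable for the fourth-order canonical form:
`ȳ(x̄) = d (1+a x̄)³ y(φ(x̄))`. -/
noncomputable def ybar (a b c d : ℝ) (y : ℝ → ℝ) (x : ℝ) : ℝ :=
  d * (1 + a * x) ^ 3 * y (phi a b c x)

lemma hasDerivAt_phi (a b c : ℝ) (hb : b ≠ 0) {x : ℝ} (ht : 1 + a * x ≠ 0) :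
    HasDerivAt (phi a b c) (1 / (b * (1 + a * x) ^ 2)) x := by
  have hT : HasDerivAt (fun x : ℝ => 1 + a * x) a x := by
    simpa using ((hasDerivAt_id x).const_mul a).const_add 1
  have hnum : HasDerivAt (fun x : ℝ => x - c * (1 + a * x)) (1 - c * a) x :=
    (hasDerivAt_id x).sub (hT.const_mul c)
  have hden : HasDerivAt (fun x : ℝ => b * (1 + a * x)) (b * a) x := hT.const_mul b
  have h := hnum.div hden (mul_ne_zero hb ht)
  refine h.congr_deriv ?_
  field_simp
  ring

set_option maxHeartbeats 1600000 in
theorem stmt_4 (a b c d : ℝ) (hb : b ≠ 0) (hd : d ≠ 0)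
    (a0 a1 : ℝ → ℝ) (U : Set ℝ) (hU : IsOpen U) (y : ℝ → ℝ)
    (hy : ContDiffOn ℝ 4 y U)
    (hode : ∀ x ∈ U,
      iteratedDeriv 4 y x + a1 x * deriv y x + a0 x * y x = 0)
    (xb : ℝ) (ht : 1 + a * xb ≠ 0) (hφ : phi a b c xb ∈ U) :
    iteratedDeriv 4 (ybar a b c d y) xb
      + (a1 (phi a b c xb) / (b ^ 3 * (1 + a * xb) ^ 6))
          * deriv (ybar a b c d y) xb
      + (a0 (phi a b c xb) / (b ^ 4 * (1 + a * xb) ^ 8)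
          - 3 * a * a1 (phi a b c xb) / (b ^ 3 * (1 + a * xb) ^ 7))
          * ybar a b c d y xb = 0 := by
  -- iterated derivatives of y on U
  have hy1 : ContDiffOn ℝ 3 (deriv y) U := hy.deriv_of_isOpen hU (by norm_num)
  have hy2 : ContDiffOn ℝ 2 (deriv (deriv y)) U := hy1.deriv_of_isOpen hU (by norm_num)
  have hy3 : ContDiffOn ℝ 1 (deriv (deriv (deriv y))) U := hy2.deriv_of_isOpen hU (by norm_num)
  have e1 : iteratedDeriv 1 y = deriv y := iteratedDeriv_one
  have e2 : iteratedDeriv 2 y = deriv (deriv y) := by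
    rw [iteratedDeriv_succ, iteratedDeriv_one]
  have e3 : iteratedDeriv 3 y = deriv (deriv (deriv y)) := by
    rw [iteratedDeriv_succ, e2]
  have e4 : iteratedDeriv 4 y = deriv (deriv (deriv (deriv y))) := by
    rw [iteratedDeriv_succ, e3]
  have hd0 : ∀ z ∈ U, HasDerivAt y (iteratedDeriv 1 y z) z := by
    intro z hz
    rw [e1]
    exact ((hy.differentiableOn (by norm_num)).differentiableAt (hU.mem_nhds hz)).hasDerivAt
  have hd1 : ∀ z ∈ U, HasDerivAt (iteratedDeriv 1 y) (iteratedDeriv 2 y z) z := by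
    intro z hz
    rw [e1, e2]
    exact ((hy1.differentiableOn (by norm_num)).differentiableAt (hU.mem_nhds hz)).hasDerivAt
  have hd2 : ∀ z ∈ U, HasDerivAt (iteratedDeriv 2 y) (iteratedDeriv 3 y z) z := by
    intro z hz
    rw [e2, e3]
    exact ((hy2.differentiableOn (by norm_num)).differentiableAt (hU.mem_nhds hz)).hasDerivAt
  have hd3 : ∀ z ∈ U, HasDerivAt (iteratedDeriv 3 y) (iteratedDeriv 4 y z) z := by
    intro z hz
    rw [e3, e4]
    exact ((hy3.differentiableOn (by norm_num)).differentiableAt (hU.mem_nhds hz)).hasDerivAt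
  -- the open set V
  set V : Set ℝ := {x | 1 + a * x ≠ 0 ∧ phi a b c x ∈ U} with hVdef
  have hxbV : xb ∈ V := ⟨ht, hφ⟩
  have hTc : Continuous (fun x : ℝ => 1 + a * x) := by continuity
  have hW : IsOpen {x : ℝ | 1 + a * x ≠ 0} := isOpen_ne.preimage hTc
  have hφcont : ContinuousOn (phi a b c) {x : ℝ | 1 + a * x ≠ 0} := by
    apply ContinuousOn.div
    · fun_prop
    · fun_prop
    · intro x hx; exact mul_ne_zero hb hx
  have hVopen : IsOpen V := by
    have h := hφcont.isOpen_inter_preimage hW hU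
    convert h using 1
    rfl
  -- derivative of 1 + a x
  have hT : ∀ x : ℝ, HasDerivAt (fun x : ℝ => 1 + a * x) a x := by
    intro x
    simpa using ((hasDerivAt_id x).const_mul a).const_add 1
  -- composite derivatives
  have hY0 : ∀ x ∈ V, HasDerivAt (fun x => y (phi a b c x))
      (iteratedDeriv 1 y (phi a b c x) * (1 / (b * (1 + a * x) ^ 2))) x :=
    fun x hx => (hd0 _ hx.2).comp x (hasDerivAt_phi a b c hb hx.1)
  have hY1 : ∀ x ∈ V, HasDerivAt (fun x => iteratedDeriv 1 y (phi a b c x))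
      (iteratedDeriv 2 y (phi a b c x) * (1 / (b * (1 + a * x) ^ 2))) x :=
    fun x hx => (hd1 _ hx.2).comp x (hasDerivAt_phi a b c hb hx.1)
  have hY2 : ∀ x ∈ V, HasDerivAt (fun x => iteratedDeriv 2 y (phi a b c x))
      (iteratedDeriv 3 y (phi a b c x) * (1 / (b * (1 + a * x) ^ 2))) x :=
    fun x hx => (hd2 _ hx.2).comp x (hasDerivAt_phi a b c hb hx.1)
  have hY3 : ∀ x ∈ V, HasDerivAt (fun x => iteratedDeriv 3 y (phi a b c x))
      (iteratedDeriv 4 y (phi a b c x) * (1 / (b * (1 + a * x) ^ 2))) x :=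
    fun x hx => (hd3 _ hx.2).comp x (hasDerivAt_phi a b c hb hx.1)
  -- the successive derivative formulas
  set g1 : ℝ → ℝ := fun x => 3 * a * d * (1 + a * x) ^ 2 * y (phi a b c x)
      + d / b * (1 + a * x) * iteratedDeriv 1 y (phi a b c x) with hg1
  set g2 : ℝ → ℝ := fun x => 6 * a ^ 2 * d * (1 + a * x) * y (phi a b c x)
      + 4 * a * d / b * iteratedDeriv 1 y (phi a b c x)
      + d / b ^ 2 * (iteratedDeriv 2 y (phi a b c x) / (1 + a * x)) with hg2
  set g3 : ℝ → ℝ := fun x => 6 * a ^ 3 * d * y (phi a b c x)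
      + 6 * a ^ 2 * d / b * (iteratedDeriv 1 y (phi a b c x) / (1 + a * x))
      + 3 * a * d / b ^ 2 * (iteratedDeriv 2 y (phi a b c x) / (1 + a * x) ^ 2)
      + d / b ^ 3 * (iteratedDeriv 3 y (phi a b c x) / (1 + a * x) ^ 3) with hg3
  set g4 : ℝ → ℝ := fun x =>
      d / b ^ 4 * (iteratedDeriv 4 y (phi a b c x) / (1 + a * x) ^ 5) with hg4
  have hD1 : ∀ x ∈ V, HasDerivAt (ybar a b c d y) (g1 x) x := by
    intro x hx
    have htx : 1 + a * x ≠ 0 := hx.1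
    have h := (((hT x).pow 3).const_mul d).mul (hY0 x hx)
    have hfun : ybar a b c d y = fun x => d * (1 + a * x) ^ 3 * y (phi a b c x) := rfl
    rw [hfun]
    refine h.congr_deriv ?_
    simp only [Pi.pow_apply]
    rw [hg1]
    simp only [e1]
    set z := phi a b c x
    set Y0 := y z
    set Y1 := deriv y z
    clear_value z Y0 Y1
    field_simp
    ring
  have hD2 : ∀ x ∈ V, HasDerivAt g1 (g2 x) x := by
    intro x hx
    have htx : 1 + a * x ≠ 0 := hx.1
    have h := ((((hT x).pow 2).const_mul (3 * a * d)).mul (hY0 x hx)).add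
      (((hT x).const_mul (d / b)).mul (hY1 x hx))
    rw [hg1]
    refine h.congr_deriv ?_
    simp only [Pi.pow_apply]
    rw [hg2]
    simp only [e1]
    set z := phi a b c x
    set Y0 := y z
    set Y1 := deriv y z
    set Y2 := iteratedDeriv 2 y z
    clear_value z Y0 Y1 Y2
    field_simp
    ring
  have hD3 : ∀ x ∈ V, HasDerivAt g2 (g3 x) x := by
    intro x hx
    have htx : 1 + a * x ≠ 0 := hx.1
    have h := ((((hT x).const_mul (6 * a ^ 2 * d)).mul (hY0 x hx)).add
      ((hY1 x hx).const_mul (4 * a * d / b))).add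
      (((hY2 x hx).div (hT x) hx.1).const_mul (d / b ^ 2))
    rw [hg2]
    refine h.congr_deriv ?_
    rw [hg3]
    simp only [e1]
    set z := phi a b c x
    set Y0 := y z
    set Y1 := deriv y z
    set Y2 := iteratedDeriv 2 y z
    set Y3 := iteratedDeriv 3 y z
    clear_value z Y0 Y1 Y2 Y3
    field_simp
    ring
  have hD4 : ∀ x ∈ V, HasDerivAt g3 (g4 x) x := by
    intro x hx
    have htx : 1 + a * x ≠ 0 := hx.1
    have h := ((((hY0 x hx).const_mul (6 * a ^ 3 * d)).add
      (((hY1 x hx).div (hT x) hx.1).const_mul (6 * a ^ 2 * d / b))).add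
      (((hY2 x hx).div ((hT x).pow 2) (pow_ne_zero 2 hx.1)).const_mul (3 * a * d / b ^ 2))).add
      (((hY3 x hx).div ((hT x).pow 3) (pow_ne_zero 3 hx.1)).const_mul (d / b ^ 3))
    rw [hg3]
    refine h.congr_deriv ?_
    simp only [Pi.pow_apply]
    rw [hg4]
    simp only [e1]
    set z := phi a b c x
    set Y0 := y z
    set Y1 := deriv y z
    set Y2 := iteratedDeriv 2 y z
    set Y3 := iteratedDeriv 3 y z
    set Y4 := iteratedDeriv 4 y z
    clear_value z Y0 Y1 Y2 Y3 Y4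
    field_simp
    ring
  -- assemble iterated derivatives of ybar
  have hE1 : Set.EqOn (deriv (ybar a b c d y)) g1 V := fun x hx => (hD1 x hx).deriv
  have hE2 : Set.EqOn (iteratedDeriv 2 (ybar a b c d y)) g2 V := by
    intro x hx
    have hev : deriv (ybar a b c d y) =ᶠ[nhds x] g1 :=
      Filter.eventuallyEq_of_mem (hVopen.mem_nhds hx) hE1
    calc iteratedDeriv 2 (ybar a b c d y) x = deriv (deriv (ybar a b c d y)) x := by
          rw [iteratedDeriv_succ, iteratedDeriv_one]
      _ = deriv g1 x := hev.deriv_eq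
      _ = g2 x := (hD2 x hx).deriv
  have hE3 : Set.EqOn (iteratedDeriv 3 (ybar a b c d y)) g3 V := by
    intro x hx
    have hev : iteratedDeriv 2 (ybar a b c d y) =ᶠ[nhds x] g2 :=
      Filter.eventuallyEq_of_mem (hVopen.mem_nhds hx) hE2
    calc iteratedDeriv 3 (ybar a b c d y) x
        = deriv (iteratedDeriv 2 (ybar a b c d y)) x := by rw [iteratedDeriv_succ]
      _ = deriv g2 x := hev.deriv_eq
      _ = g3 x := (hD3 x hx).deriv
  have hE4 : iteratedDeriv 4 (ybar a b c d y) xb = g4 xb := by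
    have hev : iteratedDeriv 3 (ybar a b c d y) =ᶠ[nhds xb] g3 :=
      Filter.eventuallyEq_of_mem (hVopen.mem_nhds hxbV) hE3
    calc iteratedDeriv 4 (ybar a b c d y) xb
        = deriv (iteratedDeriv 3 (ybar a b c d y)) xb := by rw [iteratedDeriv_succ]
      _ = deriv g3 xb := hev.deriv_eq
      _ = g4 xb := (hD4 xb hxbV).deriv
  -- conclude
  have h4 : iteratedDeriv 4 y (phi a b c xb) =
      -(a1 (phi a b c xb) * iteratedDeriv 1 y (phi a b c xb)
        + a0 (phi a b c xb) * y (phi a b c xb)) := by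
    rw [e1]
    linarith [hode _ hφ]
  rw [hE4, hE1 hxbV, hg1, hg4]
  show d / b ^ 4 * (iteratedDeriv 4 y (phi a b c xb) / (1 + a * xb) ^ 5)
      + (a1 (phi a b c xb) / (b ^ 3 * (1 + a * xb) ^ 6))
          * (3 * a * d * (1 + a * xb) ^ 2 * y (phi a b c xb)
            + d / b * (1 + a * xb) * iteratedDeriv 1 y (phi a b c xb))
      + (a0 (phi a b c xb) / (b ^ 4 * (1 + a * xb) ^ 8)
          - 3 * a * a1 (phi a b c xb) / (b ^ 3 * (1 + a * xb) ^ 7))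
          * (d * (1 + a * xb) ^ 3 * y (phi a b c xb)) = 0
  rw [h4]
  simp only [e1]
  set z := phi a b c xb
  set Y0 := y z
  set Y1 := deriv y z
  set A0 := a0 z
  set A1 := a1 z
  clear_value z Y0 Y1 A0 A1
  field_simp
  ring
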